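/- The limiting self-interaction value of the Ewald-split Stokeslet is lim_{|r|→0} ( G_{jl}(r) − 4π G^R_{jl}(r, ξ) ) = ( γ/2 + log ξ + 1 ) δ_{jl}, where γ is the Euler–Mascheroni constant. -/

import Mathlib

open Filter Topology MeasureTheory

/-- The exponential integral `E₁(x) = ∫_x^∞ e^{-t}/t dt`. -/
noncomputable def expInt (x : ℝ) : ℝ := ∫ t in Set.Ioi x, Real.exp (-t) / t

/-- The 2D Stokeslet tensor `G_{jl}(r) = -δ_{jl} log|r| + r_j r_l / |r|²`. -/
noncomputable def stokeslet (j l : Fin 2) (r : EuclideanSpace ℝ (Fin 2)) : ℝ :=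
  -(if j = l then (1 : ℝ) else 0) * Real.log ‖r‖ + r j * r l / ‖r‖ ^ 2

/-- `4π G^R_{jl}(r,ξ) = e^{-ξ²|r|²}( r_j r_l/|r|² − δ_{jl} ) + (δ_{jl}/2) E₁(ξ²|r|²)`. -/
noncomputable def fourPiEwaldRealStokeslet (j l : Fin 2) (r : EuclideanSpace ℝ (Fin 2))
    (ξ : ℝ) : ℝ :=
  Real.exp (-ξ ^ 2 * ‖r‖ ^ 2) * (r j * r l / ‖r‖ ^ 2 - (if j = l then (1 : ℝ) else 0))
    + ((if j = l then (1 : ℝ) else 0) / 2) * expInt (ξ ^ 2 * ‖r‖ ^ 2)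

section Helpers
open Set Real

local notation "γ" => Real.eulerMascheroniConstant

lemma integrableOn_exp_div {x : ℝ} (hx : 0 < x) :
    IntegrableOn (fun t => Real.exp (-t) / t) (Ioi x) := by
  have h1 : IntegrableOn (fun t : ℝ => x⁻¹ * Real.exp (-t)) (Ioi x) := by
    have := (exp_neg_integrableOn_Ioi x (b := 1) one_pos).const_mul x⁻¹
    simpa [IntegrableOn] using this
  refine h1.mono' ?_ ?_
  · exact ((Real.measurable_exp.comp measurable_neg).div measurable_id).aestronglyMeasurable
  · filter_upwards [ae_restrict_mem measurableSet_Ioi] with t ht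
    have htx : x < t := ht
    have ht0 : 0 < t := hx.trans htx
    rw [Real.norm_eq_abs, abs_div, abs_of_pos (Real.exp_pos _), abs_of_pos ht0]
    rw [div_le_iff₀ ht0]
    calc Real.exp (-t) = x⁻¹ * Real.exp (-t) * x := by field_simp
    _ ≤ x⁻¹ * Real.exp (-t) * t := by
        apply mul_le_mul_of_nonneg_left htx.le
        positivity

lemma tendsto_setIntegral_Ioc_left {g : ℝ → ℝ} (hg : IntegrableOn g (Ioc 0 1)) :
    Tendsto (fun ε : ℝ => ∫ t in Ioc ε 1, g t) (𝓝[>] 0) (𝓝 (∫ t in Ioc 0 1, g t)) := by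
  have heq : ∀ᶠ ε in 𝓝[>] (0:ℝ),
      (∫ t in Ioc ε 1, g t) = ∫ t in Ioc (0:ℝ) 1, (Ioi ε).indicator g t := by
    filter_upwards [self_mem_nhdsWithin] with ε (hε : 0 < ε)
    rw [setIntegral_indicator measurableSet_Ioi]
    have hset : Ioc (0:ℝ) 1 ∩ Ioi ε = Ioc ε 1 := by
      ext t
      simp only [mem_inter_iff, mem_Ioc, mem_Ioi]
      exact ⟨fun ⟨⟨h1, h2⟩, h3⟩ => ⟨h3, h2⟩, fun ⟨h1, h2⟩ => ⟨⟨hε.trans h1, h2⟩, h1⟩⟩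
    rw [hset]
  rw [tendsto_congr' heq]
  apply tendsto_integral_filter_of_dominated_convergence (fun t => ‖g t‖)
  · filter_upwards with ε
    exact (hg.1.indicator measurableSet_Ioi)
  · filter_upwards with ε
    filter_upwards with t
    exact norm_indicator_le_norm_self g t
  · exact hg.norm
  · filter_upwards [ae_restrict_mem measurableSet_Ioc] with t ht
    have : ∀ᶠ ε in 𝓝[>] (0:ℝ), (Ioi ε).indicator g t = g t := by
      have : ∀ᶠ ε in 𝓝 (0:ℝ), ε < t := eventually_lt_nhds ht.1
      filter_upwards [this.filter_mono nhdsWithin_le_nhds] with ε hε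
      exact indicator_of_mem hε g
    exact Tendsto.congr' (this.mono fun ε h => h.symm) tendsto_const_nhds

lemma integral_exp_neg_mul_log : ∫ t in Ioi (0:ℝ), Real.exp (-t) * Real.log t = -γ := by
  have hc := Complex.hasDerivAt_GammaIntegral (s := 1) (by norm_num)
  have h2 : (∫ t : ℝ in Ioi 0, (t:ℂ) ^ ((1:ℂ) - 1) * (Real.log t * Real.exp (-t)))
      = ((∫ t : ℝ in Ioi 0, Real.exp (-t) * Real.log t : ℝ) : ℂ) := by
    calc (∫ t : ℝ in Ioi 0, (t:ℂ) ^ ((1:ℂ) - 1) * (Real.log t * Real.exp (-t)))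
        = ∫ t : ℝ in Ioi 0, ((Real.exp (-t) * Real.log t : ℝ) : ℂ) := by
          apply setIntegral_congr_fun measurableSet_Ioi
          intro t _
          simp only [sub_self, Complex.cpow_zero, one_mul]
          push_cast
          ring
      _ = _ := integral_ofReal
  rw [h2] at hc
  have hre : HasDerivAt (fun x : ℝ => (Complex.GammaIntegral ↑x).re)
      (((∫ t : ℝ in Ioi 0, Real.exp (-t) * Real.log t : ℝ) : ℂ)).re 1 :=
    hc.real_of_complex
  have heq : (fun x : ℝ => (Complex.GammaIntegral ↑x).re) =ᶠ[𝓝 (1:ℝ)] Real.Gamma := by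
    filter_upwards [Ioi_mem_nhds (by norm_num : (0:ℝ) < 1)] with x (hx : 0 < x)
    rw [← Complex.Gamma_eq_integral (by simpa using hx), Complex.Gamma_ofReal]
    simp
  have hre' : HasDerivAt Real.Gamma (∫ t in Ioi (0:ℝ), Real.exp (-t) * Real.log t) 1 := by
    simpa using hre.congr_of_eventuallyEq heq.symm
  exact hre'.unique Real.hasDerivAt_Gamma_one

lemma integrableOn_exp_mul_log_Ioc :
    IntegrableOn (fun t => Real.exp (-t) * Real.log t) (Ioc 0 1) := by
  have hb : IntegrableOn (fun t : ℝ => 2 * t ^ (-(1/2) : ℝ)) (Ioc 0 1) := by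
    have h := (intervalIntegral.intervalIntegrable_rpow' (a := 0) (b := 1)
      (r := -(1/2)) (by norm_num))
    rw [intervalIntegrable_iff_integrableOn_Ioc_of_le (by norm_num)] at h
    exact h.const_mul 2
  refine hb.mono' ?_ ?_
  · exact ((Real.measurable_exp.comp measurable_neg).mul Real.measurable_log).aestronglyMeasurable
  · filter_upwards [ae_restrict_mem measurableSet_Ioc] with t ht
    have ht0 : 0 < t := ht.1
    have hrp : (0:ℝ) < t ^ (-(1/2) : ℝ) := Real.rpow_pos_of_pos ht0 _
    have hlog : -Real.log t ≤ 2 * t ^ (-(1/2) : ℝ) := by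
      have h1 : Real.log (t ^ (-(1/2) : ℝ)) ≤ t ^ (-(1/2) : ℝ) - 1 :=
        Real.log_le_sub_one_of_pos hrp
      rw [Real.log_rpow ht0] at h1
      nlinarith
    have hle : |Real.log t| = -Real.log t := by
      rw [abs_of_nonpos (Real.log_nonpos ht0.le ht.2)]
    have hln : Real.log t ≤ 0 := Real.log_nonpos ht0.le ht.2
    rw [norm_mul, Real.norm_eq_abs, Real.norm_eq_abs, abs_of_pos (Real.exp_pos _), hle]
    calc Real.exp (-t) * -Real.log t ≤ 1 * -Real.log t := by
          apply mul_le_mul_of_nonneg_right (Real.exp_le_one_iff.mpr (by linarith)) (by linarith)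
    _ = -Real.log t := one_mul _
    _ ≤ 2 * t ^ (-(1/2) : ℝ) := hlog

lemma integrableOn_exp_mul_log_Ioi :
    IntegrableOn (fun t => Real.exp (-t) * Real.log t) (Ioi 1) := by
  have hb := (Real.GammaIntegral_convergent (by norm_num : (0:ℝ) < 2)).mono_set
    (Ioi_subset_Ioi zero_le_one)
  refine hb.mono' ?_ ?_
  · exact ((Real.measurable_exp.comp measurable_neg).mul Real.measurable_log).aestronglyMeasurable
  · filter_upwards [ae_restrict_mem measurableSet_Ioi] with t (ht : 1 < t)
    have ht0 : 0 < t := zero_lt_one.trans ht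
    rw [norm_mul, Real.norm_eq_abs, Real.norm_eq_abs, abs_of_pos (Real.exp_pos _),
      abs_of_nonneg (Real.log_nonneg ht.le)]
    have h1 : Real.log t ≤ t := (Real.log_le_sub_one_of_pos ht0).trans (by linarith)
    have h2 : t ^ ((2:ℝ) - 1) = t := by
      rw [show (2:ℝ) - 1 = 1 by norm_num, Real.rpow_one]
    rw [h2]
    exact mul_le_mul_of_nonneg_left h1 (Real.exp_pos _).le

lemma integral_Ioi_one_eq_expInt :
    ∫ t in Ioi (1:ℝ), Real.exp (-t) * Real.log t = expInt 1 := by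
  have hdiv := integrableOn_exp_div zero_lt_one
  have hint : IntegrableOn
      (fun t => Real.exp (-t) * Real.log t - Real.exp (-t) / t) (Ioi 1) :=
    integrableOn_exp_mul_log_Ioi.sub hdiv
  have hd : ∀ t ∈ Ioi (1:ℝ), HasDerivAt (fun t => -(Real.exp (-t) * Real.log t))
      (Real.exp (-t) * Real.log t - Real.exp (-t) / t) t := by
    intro t ht
    have ht0 : (0:ℝ) < t := zero_lt_one.trans ht
    have h1 : HasDerivAt (fun t : ℝ => Real.exp (-t)) (Real.exp (-t) * (-1)) t :=
      (hasDerivAt_neg t).exp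
    have h2 : HasDerivAt Real.log t⁻¹ t := Real.hasDerivAt_log ht0.ne'
    have := (h1.mul h2).neg
    refine this.congr_deriv ?_
    ring
  have hcont : ContinuousWithinAt (fun t => -(Real.exp (-t) * Real.log t)) (Ici 1) 1 := by
    apply ContinuousAt.continuousWithinAt
    exact (((Real.continuous_exp.comp continuous_neg).continuousAt).mul
      (Real.continuousAt_log one_ne_zero)).neg
  have htend : Tendsto (fun t => -(Real.exp (-t) * Real.log t)) atTop (𝓝 0) := by
    apply squeeze_zero_norm' _ (tendsto_pow_mul_exp_neg_atTop_nhds_zero 1)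
    filter_upwards [eventually_ge_atTop (1:ℝ)] with t ht
    have ht0 : (0:ℝ) < t := lt_of_lt_of_le zero_lt_one ht
    rw [norm_neg, norm_mul, Real.norm_eq_abs, Real.norm_eq_abs,
      abs_of_pos (Real.exp_pos _), abs_of_nonneg (Real.log_nonneg ht), pow_one, mul_comm]
    exact mul_le_mul_of_nonneg_right
      ((Real.log_le_sub_one_of_pos ht0).trans (by linarith)) (Real.exp_pos _).le
  have key := integral_Ioi_of_hasDerivAt_of_tendsto hcont hd hint htend
  rw [integral_sub integrableOn_exp_mul_log_Ioi hdiv] at key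
  simp only [Real.log_one, mul_zero, neg_zero, sub_zero, zero_sub, neg_neg] at key
  have : expInt 1 = ∫ t in Ioi (1:ℝ), Real.exp (-t) / t := rfl
  rw [this]
  linarith

lemma integrableOn_w : IntegrableOn (fun t => (Real.exp (-t) - 1) / t) (Ioc 0 1) := by
  have hb : IntegrableOn (fun _ : ℝ => (1:ℝ)) (Ioc 0 1) :=
    integrableOn_const (by simp)
  refine hb.mono' ?_ ?_
  · exact (((Real.measurable_exp.comp measurable_neg).sub measurable_const).div
      measurable_id).aestronglyMeasurable
  · filter_upwards [ae_restrict_mem measurableSet_Ioc] with t ht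
    have ht0 : 0 < t := ht.1
    have h1 : 1 - t ≤ Real.exp (-t) := by
      have := Real.add_one_le_exp (-t); linarith
    have h2 : Real.exp (-t) ≤ 1 := Real.exp_le_one_iff.mpr (by linarith)
    rw [Real.norm_eq_abs, abs_div, abs_of_pos ht0, div_le_one ht0, abs_le]
    constructor <;> linarith

lemma exp_sub_one_hasDeriv {t : ℝ} (ht : 0 < t) :
    HasDerivAt (fun t => -((Real.exp (-t) - 1) * Real.log t))
      (Real.exp (-t) * Real.log t - (Real.exp (-t) - 1) / t) t := by
  have h1 : HasDerivAt (fun t : ℝ => Real.exp (-t) - 1) (Real.exp (-t) * (-1)) t :=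
    ((hasDerivAt_neg t).exp).sub_const 1
  have h2 : HasDerivAt Real.log t⁻¹ t := Real.hasDerivAt_log ht.ne'
  have := (h1.mul h2).neg
  refine this.congr_deriv ?_
  ring

lemma integral_Ioc_exp_log_eq :
    ∫ t in Ioc (0:ℝ) 1, Real.exp (-t) * Real.log t
      = ∫ t in Ioc (0:ℝ) 1, (Real.exp (-t) - 1) / t := by
  have hA := tendsto_setIntegral_Ioc_left integrableOn_exp_mul_log_Ioc
  have hB := tendsto_setIntegral_Ioc_left integrableOn_w
  have hAB := hA.sub hB
  have heq : ∀ᶠ ε in 𝓝[>] (0:ℝ),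
      (∫ t in Ioc ε 1, Real.exp (-t) * Real.log t)
        - (∫ t in Ioc ε 1, (Real.exp (-t) - 1) / t)
      = (Real.exp (-ε) - 1) * Real.log ε := by
    filter_upwards [Ioo_mem_nhdsGT_of_mem (⟨le_refl 0, zero_lt_one⟩ : (0:ℝ) ∈ Ico 0 1)]
      with ε hε
    have hε1 : ε ≤ 1 := hε.2.le
    have huIcc : uIcc ε 1 = Icc ε 1 := uIcc_of_le hε1
    have hsub : Icc ε 1 ⊆ {(0:ℝ)}ᶜ := fun t h1 h2 => by
      simp only [mem_singleton_iff] at h2; rw [h2] at h1; exact absurd h1.1 (not_le.mpr hε.1)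
    have hu : ContinuousOn (fun t => Real.exp (-t) * Real.log t) (Icc ε 1) :=
      (Real.continuous_exp.comp continuous_neg).continuousOn.mul
        (Real.continuousOn_log.mono hsub)
    have hw : ContinuousOn (fun t => (Real.exp (-t) - 1) / t) (Icc ε 1) := by
      apply ContinuousOn.div
        (((Real.continuous_exp.comp continuous_neg).continuousOn).sub continuousOn_const)
        continuousOn_id
      intro t h1
      have : 0 < t := lt_of_lt_of_le hε.1 h1.1
      simpa using this.ne'
    have hderiv : ∀ t ∈ uIcc ε 1,
        HasDerivAt (fun t => -((Real.exp (-t) - 1) * Real.log t))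
          (Real.exp (-t) * Real.log t - (Real.exp (-t) - 1) / t) t := by
      intro t ht
      rw [huIcc] at ht
      exact exp_sub_one_hasDeriv (lt_of_lt_of_le hε.1 ht.1)
    have hii : IntervalIntegrable
        (fun t => Real.exp (-t) * Real.log t - (Real.exp (-t) - 1) / t) volume ε 1 := by
      apply ContinuousOn.intervalIntegrable
      rw [huIcc]; exact hu.sub hw
    have key := intervalIntegral.integral_eq_sub_of_hasDerivAt hderiv hii
    rw [intervalIntegral.integral_sub
        (by apply ContinuousOn.intervalIntegrable; rw [huIcc]; exact hu)
        (by apply ContinuousOn.intervalIntegrable; rw [huIcc]; exact hw)] at key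
    rw [intervalIntegral.integral_of_le hε1, intervalIntegral.integral_of_le hε1] at key
    rw [key]
    simp [Real.log_one]
  have h0 : Tendsto (fun ε : ℝ => (Real.exp (-ε) - 1) * Real.log ε) (𝓝[>] 0) (𝓝 0) := by
    have hb : Tendsto (fun ε : ℝ => |Real.log ε * ε ^ (1:ℝ)|) (𝓝[>] 0) (𝓝 0) := by
      simpa using (tendsto_log_mul_rpow_nhdsGT_zero zero_lt_one).abs
    apply squeeze_zero_norm' _ hb
    filter_upwards [self_mem_nhdsWithin] with ε (hε0 : 0 < ε)
    have h1 : 1 - ε ≤ Real.exp (-ε) := by have := Real.add_one_le_exp (-ε); linarith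
    have h2 : Real.exp (-ε) ≤ 1 := Real.exp_le_one_iff.mpr (by linarith)
    have hL : ‖(Real.exp (-ε) - 1) * Real.log ε‖ = |Real.exp (-ε) - 1| * |Real.log ε| := by
      rw [Real.norm_eq_abs, abs_mul]
    rw [hL, Real.rpow_one, abs_mul, mul_comm |Real.log ε| |ε|]
    exact mul_le_mul_of_nonneg_right
      (by rw [abs_of_nonpos (by linarith), abs_of_pos hε0]; linarith) (abs_nonneg _)
  have hval := tendsto_nhds_unique (hAB.congr' heq) h0
  linarith

lemma const_eq : (∫ t in Ioc (0:ℝ) 1, (Real.exp (-t) - 1) / t) + expInt 1 = -γ := by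
  have hun : Ioc (0:ℝ) 1 ∪ Ioi 1 = Ioi 0 := Ioc_union_Ioi_eq_Ioi zero_le_one
  have hdisj : Disjoint (Ioc (0:ℝ) 1) (Ioi (1:ℝ)) := by
    rw [Set.disjoint_left]
    rintro t ⟨_, h1⟩ h2
    exact absurd h2 (not_lt.mpr h1)
  have hsplit := setIntegral_union hdisj measurableSet_Ioi
    integrableOn_exp_mul_log_Ioc integrableOn_exp_mul_log_Ioi
    (f := fun t => Real.exp (-t) * Real.log t) (μ := volume)
  rw [hun, integral_exp_neg_mul_log, integral_Ioc_exp_log_eq, integral_Ioi_one_eq_expInt]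
    at hsplit
  linarith

lemma tendsto_expInt_add_log :
    Tendsto (fun x => expInt x + Real.log x) (𝓝[>] (0:ℝ)) (𝓝 (-γ)) := by
  have hC := (tendsto_setIntegral_Ioc_left integrableOn_w).add_const (expInt 1)
  rw [const_eq] at hC
  apply hC.congr'
  filter_upwards [Ioo_mem_nhdsGT_of_mem (⟨le_refl 0, zero_lt_one⟩ : (0:ℝ) ∈ Ico 0 1)]
    with x hx
  -- show (∫ t in Ioc x 1, (exp(-t)-1)/t) + expInt 1 = expInt x + log x
  have hun : Ioc x 1 ∪ Ioi 1 = Ioi x := Ioc_union_Ioi_eq_Ioi hx.2.le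
  have hdisj : Disjoint (Ioc x 1) (Ioi (1:ℝ)) := by
    rw [Set.disjoint_left]
    rintro t ⟨_, h1⟩ h2
    exact absurd h2 (not_lt.mpr h1)
  have hi1 : IntegrableOn (fun t => Real.exp (-t) / t) (Ioc x 1) :=
    (integrableOn_exp_div hx.1).mono_set Ioc_subset_Ioi_self
  have hsplit := setIntegral_union hdisj measurableSet_Ioi hi1
    (integrableOn_exp_div zero_lt_one) (f := fun t => Real.exp (-t) / t) (μ := volume)
  rw [hun] at hsplit
  have hEx : expInt x = (∫ t in Ioc x 1, Real.exp (-t) / t) + expInt 1 := hsplit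
  -- now ∫_{Ioc x 1} exp(-t)/t = ∫_{Ioc x 1} (exp(-t)-1)/t - log x
  have huIcc : uIcc x 1 = Icc x 1 := uIcc_of_le hx.2.le
  have hpos : ∀ t ∈ Icc x 1, 0 < t := fun t ht => lt_of_lt_of_le hx.1 ht.1
  have hw : ContinuousOn (fun t => (Real.exp (-t) - 1) / t) (Icc x 1) := by
    apply ContinuousOn.div
      (((Real.continuous_exp.comp continuous_neg).continuousOn).sub continuousOn_const)
      continuousOn_id
    intro t h1
    simpa using (hpos t h1).ne'
  have h1t : ContinuousOn (fun t : ℝ => 1 / t) (Icc x 1) := by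
    apply ContinuousOn.div continuousOn_const continuousOn_id
    intro t h1
    simpa using (hpos t h1).ne'
  have hcongr : ∀ t ∈ uIcc x 1, Real.exp (-t) / t = (Real.exp (-t) - 1) / t + 1 / t := by
    intro t ht
    rw [huIcc] at ht
    field_simp
    ring
  have h2 : ∫ t in Ioc x 1, Real.exp (-t) / t
      = (∫ t in Ioc x 1, (Real.exp (-t) - 1) / t) + (- Real.log x) := by
    rw [← intervalIntegral.integral_of_le hx.2.le, ← intervalIntegral.integral_of_le hx.2.le]
    rw [intervalIntegral.integral_congr hcongr,
      intervalIntegral.integral_add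
        (hw.intervalIntegrable_of_Icc hx.2.le) (h1t.intervalIntegrable_of_Icc hx.2.le),
      integral_one_div (by
        intro h
        rw [Set.uIcc_of_le hx.2.le] at h
        exact absurd h.1 (not_le.mpr hx.1))]
    rw [one_div, Real.log_inv]
  rw [hEx, h2]
  ring

/-- Limiting self-interaction of the Ewald-split Stokeslet, along a fixed direction `d`:
`lim_{ε→0⁺} ( G_{jl}(εd) − 4π G^R_{jl}(εd, ξ) ) = ( γ/2 + log ξ + 1 ) δ_{jl}`,
where `γ` is the Euler–Mascheroni constant. -/
theorem ewald_stokeslet_self_interaction (ξ : ℝ) (hξ : 0 < ξ)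
    (d : EuclideanSpace ℝ (Fin 2)) (hd : ‖d‖ = 1) (j l : Fin 2) :
    Tendsto
      (fun ε : ℝ => stokeslet j l (ε • d) - fourPiEwaldRealStokeslet j l (ε • d) ξ)
      (𝓝[>] (0 : ℝ))
      (𝓝 ((Real.eulerMascheroniConstant / 2 + Real.log ξ + 1) *
        (if j = l then (1 : ℝ) else 0))) := by
  have hcomp : Tendsto (fun ε : ℝ => ξ^2 * ε^2) (𝓝[>] 0) (𝓝[>] 0) := by
    rw [tendsto_nhdsWithin_iff]
    constructor
    · exact ((continuous_const.mul (continuous_pow 2)).tendsto' 0 _ (by simp)).mono_left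
        nhdsWithin_le_nhds
    · filter_upwards [self_mem_nhdsWithin] with ε (hε : 0 < ε)
      exact mul_pos (pow_pos hξ 2) (pow_pos hε 2)
  have hF : Tendsto (fun ε : ℝ => expInt (ξ^2*ε^2) + Real.log (ξ^2*ε^2)) (𝓝[>] 0)
      (𝓝 (-Real.eulerMascheroniConstant)) := tendsto_expInt_add_log.comp hcomp
  have hexp : Tendsto (fun ε : ℝ => Real.exp (-ξ^2 * ε^2)) (𝓝[>] 0) (𝓝 1) := by
    have hcont : Continuous fun ε : ℝ => Real.exp (-ξ^2*ε^2) := by continuity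
    exact (hcont.tendsto' 0 1 (by simp)).mono_left nhdsWithin_le_nhds
  have hg : Tendsto (fun ε : ℝ => d j * d l
        - Real.exp (-ξ^2*ε^2) * (d j * d l - (if j = l then (1:ℝ) else 0))
        - (if j = l then (1:ℝ) else 0)/2 * (expInt (ξ^2*ε^2) + Real.log (ξ^2*ε^2))
        + (if j = l then (1:ℝ) else 0) * Real.log ξ) (𝓝[>] 0)
      (𝓝 (d j * d l - 1 * (d j * d l - (if j = l then (1:ℝ) else 0))
        - (if j = l then (1:ℝ) else 0)/2 * (-Real.eulerMascheroniConstant)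
        + (if j = l then (1:ℝ) else 0) * Real.log ξ)) :=
    ((tendsto_const_nhds.sub (hexp.mul tendsto_const_nhds)).sub
      (tendsto_const_nhds.mul hF)).add tendsto_const_nhds
  have hval : d j * d l - 1 * (d j * d l - (if j = l then (1:ℝ) else 0))
        - (if j = l then (1:ℝ) else 0)/2 * (-Real.eulerMascheroniConstant)
        + (if j = l then (1:ℝ) else 0) * Real.log ξ
      = (Real.eulerMascheroniConstant/2 + Real.log ξ + 1) * (if j = l then (1:ℝ) else 0) := by ring
  rw [hval] at hg
  apply hg.congr'
  filter_upwards [self_mem_nhdsWithin] with ε (hε : 0 < ε)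
  have hne : ‖ε • d‖ = ε := by
    rw [norm_smul, hd, Real.norm_eq_abs, abs_of_pos hε, mul_one]
  have happ : ∀ i, (ε • d) i = ε * d i := fun i => rfl
  simp only [stokeslet, fourPiEwaldRealStokeslet, hne, happ]
  have hε2 : (ε:ℝ)^2 ≠ 0 := pow_ne_zero 2 hε.ne'
  have hdd : ε * d j * (ε * d l) / ε ^ 2 = d j * d l := by field_simp
  have hlog : Real.log (ξ^2 * ε^2) = 2*Real.log ξ + 2*Real.log ε := by
    rw [Real.log_mul (pow_ne_zero 2 hξ.ne') hε2, Real.log_pow, Real.log_pow]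
    push_cast
    ring
  rw [hdd, hlog]
  ring

end Helpers
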